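/- Let G be a connected graph and let G' be obtained from G by adding one universal vertex (a vertex adjacent to all vertices of G). Then G is connected-domishold if and only if G' is connected-domishold. -/

import Mathlib

open SimpleGraph Finset BigOperators

variable {V : Type*} [Fintype V] [DecidableEq V]

/-- `S` is a connected dominating set of `G`: every vertex is in `S` or has a neighbor in `S`,
and any two vertices of `S` are joined by a walk staying inside `S`
(i.e. `S` induces a connected subgraph). -/
def SimpleGraph.IsCDSet (G : SimpleGraph V) (S : Finset V) : Prop :=
  (∀ v : V, v ∈ S ∨ ∃ u ∈ S, G.Adj u v) ∧
  ∀ u ∈ S, ∀ v ∈ S, ∃ p : G.Walk u v, ∀ x ∈ p.support, x ∈ S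

/-- `(w, t)` is a connected-domishold structure of `G`. -/
def SimpleGraph.IsCDStructure (G : SimpleGraph V) (w : V → ℝ) (t : ℝ) : Prop :=
  (∀ v, 0 ≤ w v) ∧ 0 ≤ t ∧ ∀ S : Finset V, (t ≤ ∑ x ∈ S, w x) ↔ G.IsCDSet S

/-- `G` is connected-domishold. -/
def SimpleGraph.ConnectedDomishold (G : SimpleGraph V) : Prop :=
  ∃ (w : V → ℝ) (t : ℝ), G.IsCDStructure w t

/-- `S` is a cutset of `G`: `G - S` is disconnected, i.e. there exist two vertices outside `S`
such that every walk between them meets `S`. -/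
def SimpleGraph.IsCutset (G : SimpleGraph V) (S : Finset V) : Prop :=
  ∃ u v : V, u ∉ S ∧ v ∉ S ∧ u ≠ v ∧ ∀ p : G.Walk u v, ∃ x ∈ p.support, x ∈ S

/-- `S` is a minimal cutset of `G`. -/
def SimpleGraph.IsMinCutset (G : SimpleGraph V) (S : Finset V) : Prop :=
  G.IsCutset S ∧ ∀ S' ⊆ S, G.IsCutset S' → S' = S

/-- A hypergraph on vertex set `V`, given by its hyperedge predicate `Eh`, is threshold. -/
def HypThreshold (Eh : Finset V → Prop) : Prop :=
  ∃ (w : V → ℝ) (t : ℝ), (∀ v, 0 ≤ w v) ∧ 0 ≤ t ∧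
    ∀ X : Finset V, (∑ v ∈ X, w v ≤ t) ↔ ∀ e, Eh e → ¬ e ⊆ X

def HypOneSperner (Eh : Finset V → Prop) : Prop :=
  ∀ e f, Eh e → Eh f → e ≠ f → min (e \ f).card (f \ e).card = 1

def HypTwoSummable (Eh : Finset V → Prop) : Prop :=
  ∃ A₁ A₂ B₁ B₂ : Finset V,
    (∃ e, Eh e ∧ e ⊆ A₁) ∧ (∃ e, Eh e ∧ e ⊆ A₂) ∧
    (∀ e, Eh e → ¬ e ⊆ B₁) ∧ (∀ e, Eh e → ¬ e ⊆ B₂) ∧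
    ∀ v : V, ((if v ∈ A₁ then 1 else 0) + (if v ∈ A₂ then 1 else 0) : ℕ)
           = (if v ∈ B₁ then 1 else 0) + (if v ∈ B₂ then 1 else 0)

/-- The graph obtained from `G` by adding one universal vertex (`none`), adjacent to all
vertices of `G`. -/
def addUniversal (G : SimpleGraph V) : SimpleGraph (Option V) :=
  SimpleGraph.fromRel (fun a b =>
    (a = none ∧ b ≠ none) ∨ (∃ u v : V, a = some u ∧ b = some v ∧ G.Adj u v))

set_option linter.unusedSectionVars false

lemma adjU_none_some (G : SimpleGraph V) (v : V) : (addUniversal G).Adj none (some v) := by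
  simp [addUniversal, SimpleGraph.fromRel_adj]

lemma adjU_some_some (G : SimpleGraph V) {a b : V} :
    (addUniversal G).Adj (some a) (some b) ↔ G.Adj a b := by
  simp only [addUniversal, SimpleGraph.fromRel_adj]
  constructor
  · rintro ⟨hne, h | h⟩ <;> rcases h with ⟨h1, h2⟩ | ⟨u, v, hu, hv, hadj⟩ <;>
      first | exact absurd h1 (by simp) |
        (injection hu with hu; injection hv with hv; subst hu; subst hv;
         first | exact hadj | exact hadj.symm)
  · intro h
    exact ⟨by simpa using h.ne, Or.inl (Or.inr ⟨a, b, rfl, rfl, h⟩)⟩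

/-- any set containing the universal vertex is a CDSet -/
lemma cdset_of_none_mem (G : SimpleGraph V) {S : Finset (Option V)} (h : none ∈ S) :
    (addUniversal G).IsCDSet S := by
  constructor
  · intro v
    match v with
    | none => exact Or.inl h
    | some x => exact Or.inr ⟨none, h, adjU_none_some G x⟩
  · intro u hu v hv
    match u, v with
    | none, none => exact ⟨SimpleGraph.Walk.nil, by simpa using h⟩
    | none, some b =>
        refine ⟨SimpleGraph.Walk.cons (adjU_none_some G b) SimpleGraph.Walk.nil, ?_⟩
        simp only [SimpleGraph.Walk.support_cons, SimpleGraph.Walk.support_nil,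
          List.mem_cons, List.mem_singleton]
        rintro x (rfl | rfl | h') <;> first | exact h | exact hv | exact absurd h' (by simp)
    | some a, none =>
        refine ⟨SimpleGraph.Walk.cons (adjU_none_some G a).symm SimpleGraph.Walk.nil, ?_⟩
        simp only [SimpleGraph.Walk.support_cons, SimpleGraph.Walk.support_nil,
          List.mem_cons, List.mem_singleton]
        rintro x (rfl | rfl | h') <;> first | exact hu | exact hv | exact absurd h' (by simp)
    | some a, some b =>
        refine ⟨SimpleGraph.Walk.cons (adjU_none_some G a).symm
          (SimpleGraph.Walk.cons (adjU_none_some G b) SimpleGraph.Walk.nil), ?_⟩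
        simp only [SimpleGraph.Walk.support_cons, SimpleGraph.Walk.support_nil,
          List.mem_cons, List.mem_singleton]
        rintro x (rfl | rfl | rfl | h') <;>
          first | exact hu | exact h | exact hv | exact absurd h' (by simp)

lemma walkDown (G : SimpleGraph V) (T : Finset V) :
    ∀ {x y : Option V} (p : (addUniversal G).Walk x y),
      (∀ z ∈ p.support, ∃ c, z = some c ∧ c ∈ T) →
      ∀ a b, x = some a → y = some b → ∃ q : G.Walk a b, ∀ c ∈ q.support, c ∈ T := by
  intro x y p
  induction p with
  | nil =>
      intro h a b hx hy
      subst hx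
      injection hy with hy
      subst hy
      refine ⟨SimpleGraph.Walk.nil, ?_⟩
      intro c hc
      simp only [SimpleGraph.Walk.support_nil, List.mem_singleton] at hc
      subst hc
      obtain ⟨c', hc', hcT⟩ := h (some c) (by simp)
      injection hc' with hc'
      subst hc'
      exact hcT
  | @cons u v w h p ih =>
      intro hsup a b hx hy
      obtain ⟨c, hvc, hcT⟩ := hsup v (by simp)
      subst hvc
      subst hx
      have hac : G.Adj a c := (adjU_some_some G).mp h
      obtain ⟨q, hq⟩ := ih (fun z hz => hsup z (by simp [hz])) c b rfl hy
      refine ⟨SimpleGraph.Walk.cons hac q, ?_⟩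
      intro d hd
      simp only [SimpleGraph.Walk.support_cons, List.mem_cons] at hd
      rcases hd with rfl | hd
      · obtain ⟨c', hc', hcT'⟩ := hsup (some d) (by simp)
        injection hc' with hc'
        subst hc'
        exact hcT'
      · exact hq d hd

def toUniv (G : SimpleGraph V) : G →g addUniversal G :=
  ⟨some, fun h => (adjU_some_some G).mpr h⟩

lemma cdset_image_iff (G : SimpleGraph V) (hne : Nonempty V) (T : Finset V) :
    (addUniversal G).IsCDSet (T.image some) ↔ G.IsCDSet T := by
  constructor
  · rintro ⟨hdom, hcon⟩
    constructor
    · intro v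
      rcases hdom (some v) with hv | ⟨u, hu, hadj⟩
      · exact Or.inl (by simpa using hv)
      · simp only [Finset.mem_image] at hu
        obtain ⟨a, haT, rfl⟩ := hu
        exact Or.inr ⟨a, haT, (adjU_some_some G).mp hadj⟩
    · intro u hu v hv
      obtain ⟨p, hp⟩ := hcon (some u) (Finset.mem_image_of_mem _ hu)
        (some v) (Finset.mem_image_of_mem _ hv)
      refine walkDown G T p ?_ u v rfl rfl
      intro z hz
      have := hp z hz
      simp only [Finset.mem_image] at this
      obtain ⟨c, hcT, rfl⟩ := this
      exact ⟨c, rfl, hcT⟩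
  · rintro ⟨hdom, hcon⟩
    have hTne : T.Nonempty := by
      obtain ⟨v⟩ := hne
      rcases hdom v with hv | ⟨u, hu, _⟩
      · exact ⟨v, hv⟩
      · exact ⟨u, hu⟩
    constructor
    · intro z
      match z with
      | none =>
          obtain ⟨a, ha⟩ := hTne
          exact Or.inr ⟨some a, Finset.mem_image_of_mem _ ha, ((adjU_none_some G a).symm)⟩
      | some v =>
          rcases hdom v with hv | ⟨u, hu, hadj⟩
          · exact Or.inl (Finset.mem_image_of_mem _ hv)
          · exact Or.inr ⟨some u, Finset.mem_image_of_mem _ hu, (adjU_some_some G).mpr hadj⟩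
    · intro x hx y hy
      simp only [Finset.mem_image] at hx hy
      obtain ⟨a, haT, rfl⟩ := hx
      obtain ⟨b, hbT, rfl⟩ := hy
      obtain ⟨q, hq⟩ := hcon a haT b hbT
      refine ⟨q.map (toUniv G), ?_⟩
      intro z hz
      replace hz : z ∈ (q.map (toUniv G)).support := hz
      rw [SimpleGraph.Walk.support_map] at hz
      simp only [List.mem_map] at hz
      obtain ⟨c, hc, rfl⟩ := hz
      exact Finset.mem_image_of_mem _ (hq c hc)


/-- Let `G` be a connected graph and `G'` be obtained from `G` by adding a universal vertex.
Then `G` is connected-domishold iff `G'` is connected-domishold. -/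
theorem connectedDomishold_addUniversal (G : SimpleGraph V) (hconn : G.Connected) :
    G.ConnectedDomishold ↔ (addUniversal G).ConnectedDomishold := by
  have hne : Nonempty V := hconn.nonempty
  constructor
  · rintro ⟨w, t, hw, ht, hiff⟩
    refine ⟨fun z => match z with | none => t | some v => w v, t,
      fun z => match z with | none => ht | some v => hw v, ht, ?_⟩
    intro S
    by_cases hn : none ∈ S
    · have h1 : t ≤ ∑ x ∈ S, (fun z => match z with | none => t | some v => w v) x := by
        have := Finset.single_le_sum
          (f := fun z => match z with | none => t | some v => w v)
          (fun z _ => by match z with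
            | none => exact ht
            | some v => exact hw v) hn
        simpa using this
      simp only [h1, true_iff]
      exact cdset_of_none_mem G hn
    · have hS : S = (S.eraseNone).image some := by
        ext z
        match z with
        | none => simp [hn]
        | some a => simp
      rw [hS]
      rw [Finset.sum_image (fun x _ y _ h => Option.some_injective _ h)]
      rw [cdset_image_iff G hne]
      exact hiff S.eraseNone
  · rintro ⟨w, t, hw, ht, hiff⟩
    refine ⟨fun v => w (some v), t, fun v => hw (some v), ht, ?_⟩
    intro T
    have := hiff (T.image some)
    rw [Finset.sum_image (fun x _ y _ h => Option.some_injective _ h)] at this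
    rw [this, cdset_image_iff G hne]
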